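/- For n×n symmetric positive definite matrices X, Y, M, the minimum over all orthogonal matrices O of the squared Mahalanobis norm tr((X^{1/2} - Y^{1/2}O)^T M^{-1} (X^{1/2} - Y^{1/2}O)) equals tr(M^{-1}X) + tr(M^{-1}Y) - 2 tr((X^{1/2} M^{-1} Y M^{-1} X^{1/2})^{1/2}). -/

import Mathlib

open Matrix Finset

-- key: tr(S*Q) ≤ tr S for S psd, Q orthogonal
open scoped MatrixOrder in
lemma trace_psd_mul_orth_le {n : Type*} [Fintype n] [DecidableEq n]
    (S Q : Matrix n n ℝ) (hS : S.PosSemidef) (hQ : Qᵀ * Q = 1) :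
    (S * Q).trace ≤ S.trace := by
  set R := CFC.sqrt S with hRdef
  have hRR : R * R = S := CFC.sqrt_mul_sqrt_self S hS.nonneg
  have hRsym : Rᵀ = R := (CFC.sqrt_nonneg S).posSemidef.isHermitian
  have h1 : (S * Q).trace = (R * Q * R).trace := by
    rw [← hRR, Matrix.mul_assoc, Matrix.trace_mul_comm]
  rw [h1, Matrix.trace, Matrix.trace]
  apply Finset.sum_le_sum
  intro i _
  simp only [Matrix.diag_apply]
  -- (R*Q*R) i i = ∑ k, (v ᵥ* Q) k * v k where v j = R i j
  set v : n → ℝ := fun j => R i j with hv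
  have hcol : ∀ j, R j i = v j := by
    intro j; rw [hv]; exact congrFun (congrFun hRsym.symm j) i
  have hRQR : (R * Q * R) i i = ∑ k, (∑ j, v j * Q j k) * v k := by
    simp [Matrix.mul_apply, hcol, Finset.sum_mul]
    rfl
  have hSii : S i i = ∑ j, v j ^ 2 := by
    rw [← hRR, Matrix.mul_apply]
    exact Finset.sum_congr rfl fun j _ => by rw [hcol j, sq]
  set w : n → ℝ := fun k => ∑ j, v j * Q j k with hw
  have hww : ∑ k, w k ^ 2 = ∑ j, v j ^ 2 := by
    have : ∑ k, w k ^ 2 = ∑ k, (∑ j, v j * Q j k) * (∑ j, v j * Q j k) := by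
      simp [hw, sq]
    rw [this]
    have h2 : ∀ j₁ j₂, ∑ k, Q j₁ k * Q j₂ k = (1 : Matrix n n ℝ) j₁ j₂ := by
      intro j₁ j₂
      have := congrFun (congrFun (mul_eq_one_comm.mp hQ : Q * Qᵀ = 1) j₁) j₂
      simpa [Matrix.mul_apply, Matrix.transpose_apply] using this
    calc ∑ k, (∑ j, v j * Q j k) * (∑ j, v j * Q j k)
        = ∑ j₁, ∑ j₂, v j₁ * v j₂ * ∑ k, Q j₁ k * Q j₂ k := by
          simp_rw [Finset.sum_mul_sum, Finset.mul_sum]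
          rw [Finset.sum_comm]
          refine Finset.sum_congr rfl fun j₁ _ => ?_
          rw [Finset.sum_comm]
          refine Finset.sum_congr rfl fun j₂ _ => ?_
          refine Finset.sum_congr rfl fun k _ => by ring
      _ = ∑ j, v j ^ 2 := by
          simp only [h2, Matrix.one_apply, mul_ite, mul_one, mul_zero]
          simp [sq]
  have hcs := Finset.sum_mul_sq_le_sq_mul_sq Finset.univ w v
  rw [hww] at hcs
  have hnn : (0:ℝ) ≤ ∑ j, v j ^ 2 := Finset.sum_nonneg fun j _ => sq_nonneg _
  rw [hRQR, hSii]
  nlinarith [hcs, hnn]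

theorem stmt3 {n : Type*} [Fintype n] [DecidableEq n]
    (X Y M sqX sqY S : Matrix n n ℝ)
    (hX : X.PosDef) (hY : Y.PosDef) (hM : M.PosDef)
    (hsqX : sqX.PosDef) (hsqX2 : sqX * sqX = X)
    (hsqY : sqY.PosDef) (hsqY2 : sqY * sqY = Y)
    (hS : S.PosDef) (hS2 : S * S = sqX * M⁻¹ * Y * M⁻¹ * sqX) :
    IsLeast
      {v : ℝ | ∃ O : Matrix n n ℝ, Oᵀ * O = 1 ∧
        v = ((sqX - sqY * O)ᵀ * M⁻¹ * (sqX - sqY * O)).trace}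
      ((M⁻¹ * X).trace + (M⁻¹ * Y).trace - 2 * S.trace) := by
  have hMi : M⁻¹.PosDef := hM.inv
  have hMisym : M⁻¹ᵀ = M⁻¹ := hMi.isHermitian
  have hSsym : Sᵀ = S := hS.isHermitian
  have hXsym : sqXᵀ = sqX := hsqX.isHermitian
  have hYsym : sqYᵀ = sqY := hsqY.isHermitian
  set A : Matrix n n ℝ := sqY * M⁻¹ * sqX with hA
  have hAT : Aᵀ = sqX * M⁻¹ * sqY := by
    simp [hA, Matrix.transpose_mul, hMisym, hXsym, hYsym, Matrix.mul_assoc]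
  have hAA : Aᵀ * A = S * S := by
    rw [hAT, hS2, hA, ← hsqY2]
    noncomm_ring
  have hSdet : IsUnit S.det := isUnit_iff_ne_zero.mpr hS.det_pos.ne'
  have hSinv : S * S⁻¹ = 1 := Matrix.mul_nonsing_inv S hSdet
  have hSinv' : S⁻¹ * S = 1 := Matrix.nonsing_inv_mul S hSdet
  have hSinvSym : S⁻¹ᵀ = S⁻¹ := by rw [Matrix.transpose_nonsing_inv, hSsym]
  -- expansion for any orthogonal O
  have key : ∀ O : Matrix n n ℝ, Oᵀ * O = 1 →
      ((sqX - sqY * O)ᵀ * M⁻¹ * (sqX - sqY * O)).trace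
        = (M⁻¹ * X).trace + (M⁻¹ * Y).trace - 2 * (Aᵀ * O).trace := by
    intro O hO
    have hOO : O * Oᵀ = 1 := mul_eq_one_comm.mp hO
    have e1 : (sqX - sqY * O)ᵀ * M⁻¹ * (sqX - sqY * O)
        = sqX * M⁻¹ * sqX + Oᵀ * sqY * M⁻¹ * sqY * O
          - sqX * M⁻¹ * sqY * O - Oᵀ * sqY * M⁻¹ * sqX := by
      simp only [Matrix.transpose_sub, Matrix.transpose_mul, hXsym, hYsym]
      noncomm_ring
    rw [e1]
    have t1 : (sqX * M⁻¹ * sqX).trace = (M⁻¹ * X).trace := by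
      calc (sqX * M⁻¹ * sqX).trace = (sqX * (sqX * M⁻¹)).trace := by
            rw [Matrix.trace_mul_comm]
        _ = ((sqX * sqX) * M⁻¹).trace := by rw [Matrix.mul_assoc]
        _ = (M⁻¹ * X).trace := by rw [hsqX2, Matrix.trace_mul_comm]
    have t2 : (Oᵀ * sqY * M⁻¹ * sqY * O).trace = (M⁻¹ * Y).trace := by
      calc (Oᵀ * sqY * M⁻¹ * sqY * O).trace
          = (Oᵀ * (sqY * M⁻¹ * sqY * O)).trace := by
            rw [show Oᵀ * sqY * M⁻¹ * sqY * O = Oᵀ * (sqY * M⁻¹ * sqY * O) from by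
              noncomm_ring]
        _ = ((sqY * M⁻¹ * sqY * O) * Oᵀ).trace := by rw [Matrix.trace_mul_comm]
        _ = ((sqY * M⁻¹ * sqY) * (O * Oᵀ)).trace := by
            rw [show sqY * M⁻¹ * sqY * O * Oᵀ = (sqY * M⁻¹ * sqY) * (O * Oᵀ) from by
              noncomm_ring]
        _ = (sqY * M⁻¹ * sqY).trace := by rw [hOO, Matrix.mul_one]
        _ = (M⁻¹ * Y).trace := by
            calc (sqY * M⁻¹ * sqY).trace = (sqY * (sqY * M⁻¹)).trace := by
                  rw [Matrix.trace_mul_comm]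
              _ = ((sqY * sqY) * M⁻¹).trace := by rw [Matrix.mul_assoc]
              _ = (M⁻¹ * Y).trace := by rw [hsqY2, Matrix.trace_mul_comm]
    have t3 : (sqX * M⁻¹ * sqY * O).trace = (Aᵀ * O).trace := by rw [hAT]
    have t4 : (Oᵀ * sqY * M⁻¹ * sqX).trace = (Aᵀ * O).trace := by
      have h := Matrix.trace_transpose (Oᵀ * sqY * M⁻¹ * sqX)
      rw [← h]
      have : (Oᵀ * sqY * M⁻¹ * sqX)ᵀ = Aᵀ * O := by
        simp [Matrix.transpose_mul, hMisym, hXsym, hYsym, hAT, Matrix.mul_assoc]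
      rw [this]
    simp only [Matrix.trace_sub, Matrix.trace_add, t1, t2, t3, t4]
    ring
  constructor
  · -- membership with O₀ = A * S⁻¹
    refine ⟨A * S⁻¹, ?_, ?_⟩
    · rw [Matrix.transpose_mul, hSinvSym]
      calc S⁻¹ * Aᵀ * (A * S⁻¹) = S⁻¹ * (Aᵀ * A) * S⁻¹ := by noncomm_ring
        _ = S⁻¹ * (S * S) * S⁻¹ := by rw [hAA]
        _ = (S⁻¹ * S) * (S * S⁻¹) := by noncomm_ring
        _ = 1 := by rw [hSinv, hSinv', Matrix.one_mul]
    · have hO : (A * S⁻¹)ᵀ * (A * S⁻¹) = 1 := by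
        rw [Matrix.transpose_mul, hSinvSym]
        calc S⁻¹ * Aᵀ * (A * S⁻¹) = S⁻¹ * (Aᵀ * A) * S⁻¹ := by noncomm_ring
          _ = S⁻¹ * (S * S) * S⁻¹ := by rw [hAA]
          _ = (S⁻¹ * S) * (S * S⁻¹) := by noncomm_ring
          _ = 1 := by rw [hSinv, hSinv', Matrix.one_mul]
      rw [key _ hO]
      have : Aᵀ * (A * S⁻¹) = S * (S * S⁻¹) := by
        rw [← Matrix.mul_assoc, hAA, Matrix.mul_assoc]
      rw [this, hSinv, Matrix.mul_one]
  · -- lower bound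
    rintro v ⟨O, hO, rfl⟩
    rw [key O hO]
    have hQ' : (A * S⁻¹)ᵀ * (A * S⁻¹) = 1 := by
      rw [Matrix.transpose_mul, hSinvSym]
      calc S⁻¹ * Aᵀ * (A * S⁻¹) = S⁻¹ * (Aᵀ * A) * S⁻¹ := by noncomm_ring
        _ = S⁻¹ * (S * S) * S⁻¹ := by rw [hAA]
        _ = (S⁻¹ * S) * (S * S⁻¹) := by noncomm_ring
        _ = 1 := by rw [hSinv, hSinv', Matrix.one_mul]
    have hQQ' : (A * S⁻¹) * (A * S⁻¹)ᵀ = 1 := mul_eq_one_comm.mp hQ'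
    -- Aᵀ = S * (A * S⁻¹)ᵀ
    have hAdec : Aᵀ = S * (A * S⁻¹)ᵀ := by
      rw [Matrix.transpose_mul A S⁻¹, hSinvSym, ← Matrix.mul_assoc, hSinv, Matrix.one_mul]
    have hQorth : ((A * S⁻¹)ᵀ * O)ᵀ * ((A * S⁻¹)ᵀ * O) = 1 := by
      rw [Matrix.transpose_mul, Matrix.transpose_transpose]
      calc Oᵀ * (A * S⁻¹) * ((A * S⁻¹)ᵀ * O)
          = Oᵀ * ((A * S⁻¹) * (A * S⁻¹)ᵀ) * O := by noncomm_ring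
        _ = 1 := by rw [hQQ', Matrix.mul_one, hO]
    have hle : (Aᵀ * O).trace ≤ S.trace := by
      have : Aᵀ * O = S * ((A * S⁻¹)ᵀ * O) := by rw [hAdec, Matrix.mul_assoc]
      rw [this]
      exact trace_psd_mul_orth_le S _ hS.posSemidef hQorth
    linarith
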